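/- Let H(z) = H_0 + H_1 z + ⋯ + H_ν z^ν ∈ F[z]^{(n−k)×n} and suppose that every not-trivially-zero full-size minor of the partial parity-check matrix 𝔥 (with parameter L) is nonzero. Then H_ν has full row rank n−k; in particular every row of H(z) has degree exactly ν, and the sum of the row degrees of H equals ν(n−k). -/

import Mathlib

/-- The partial parity-check matrix `𝔥 ∈ F^{(L+1)(n-k) × (ν+L+1)n}` built from
coefficient matrices `H 0, …, H ν ∈ F^{(n-k) × n}`: its `(s,t)` block (for
`0 ≤ s ≤ L`, `0 ≤ t ≤ ν+L`) is `H (ν - (t-s))` when `s ≤ t ≤ s + ν` and `0`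
otherwise, i.e. the `s`-th block row is `[0 … 0 H_ν … H_0 0 … 0]`. -/
def ppcm (F : Type) [Field F] (n k ν L : ℕ)
    (H : Fin (ν + 1) → Matrix (Fin (n - k)) (Fin n) F) :
    Matrix (Fin ((L + 1) * (n - k))) (Fin ((ν + L + 1) * n)) F :=
  fun r c =>
    if h : (r : ℕ) % (n - k) < n - k ∧ (c : ℕ) % n < n ∧
        (r : ℕ) / (n - k) ≤ (c : ℕ) / n ∧ (c : ℕ) / n ≤ (r : ℕ) / (n - k) + ν then
      H ⟨ν - ((c : ℕ) / n - (r : ℕ) / (n - k)), by omega⟩ ⟨_, h.1⟩ ⟨_, h.2.1⟩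
    else 0

/-- The index criterion characterizing the not-trivially-zero full-size minors
of `𝔥` (Lemma `index`), stated 0-based. -/
def colCond (n k ν L : ℕ) {A Nc : ℕ} (j : Fin A → Fin Nc) : Prop :=
  ∀ l : Fin A, ∀ s : ℕ, 1 ≤ s → s ≤ L →
    ((l : ℕ) = (n - k) * s → s * n ≤ (j l : ℕ)) ∧
    ((l : ℕ) + 1 = (n - k) * s → (j l : ℕ) < s * n + ν * n)

/-- The degree of the `r`-th row of the polynomial matrix
`H(z) = H_0 + H_1 z + ⋯ + H_ν z^ν`. -/
noncomputable def rowDeg (F : Type) [Field F] (n k ν : ℕ)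
    (H : Fin (ν + 1) → Matrix (Fin (n - k)) (Fin n) F) (r : Fin (n - k)) : ℕ :=
  Finset.univ.sup fun c : Fin n =>
    (∑ i : Fin (ν + 1), Polynomial.C (H i r c) * Polynomial.X ^ (i : ℕ)).natDegree

open Matrix Polynomial

lemma ppcm_apply_diag (F : Type) [Field F] (n k ν L : ℕ)
    (H : Fin (ν + 1) → Matrix (Fin (n - k)) (Fin n) F)
    (r : Fin ((L + 1) * (n - k))) (c : Fin ((ν + L + 1) * n))
    (hnk : 0 < n - k) (hn : 0 < n) (hd : (r : ℕ) / (n - k) = (c : ℕ) / n) :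
    ppcm F n k ν L H r c =
      H (Fin.last ν) ⟨(r : ℕ) % (n - k), Nat.mod_lt _ hnk⟩ ⟨(c : ℕ) % n, Nat.mod_lt _ hn⟩ := by
  rw [ppcm, dif_pos ⟨Nat.mod_lt _ hnk, Nat.mod_lt _ hn, le_of_eq hd, by omega⟩]
  congr 1
  exact Fin.ext (by simp [Fin.val_last]; omega)

lemma ppcm_apply_zero (F : Type) [Field F] (n k ν L : ℕ)
    (H : Fin (ν + 1) → Matrix (Fin (n - k)) (Fin n) F)
    (r : Fin ((L + 1) * (n - k))) (c : Fin ((ν + L + 1) * n))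
    (hd : (c : ℕ) / n < (r : ℕ) / (n - k)) :
    ppcm F n k ν L H r c = 0 := by
  rw [ppcm, dif_neg]
  intro hcon
  exact absurd hcon.2.2.1 (by omega)

/-- If every not-trivially-zero full-size minor of the partial parity-check
matrix `𝔥` is nonzero, then `H_ν` has full row rank `n - k`; in particular every
row of `H(z)` has degree exactly `ν`, and the sum of the row degrees of `H`
equals `ν(n-k)`. -/
theorem Hnu_full_row_rank (F : Type) [Field F]
    (n k ν L : ℕ) (hk : k < n) (hk0 : 0 < k) (hν : 0 < ν) (hL : 0 < L)
    (H : Fin (ν + 1) → Matrix (Fin (n - k)) (Fin n) F)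
    (hminor : ∀ j : Fin ((L + 1) * (n - k)) → Fin ((ν + L + 1) * n),
      StrictMono j → colCond n k ν L j →
        ((ppcm F n k ν L H).submatrix id j).det ≠ 0) :
    (H (Fin.last ν)).rank = n - k ∧
    (∀ r : Fin (n - k), rowDeg F n k ν H r = ν) ∧
    (∑ r : Fin (n - k), rowDeg F n k ν H r) = ν * (n - k) := by
  have hnk : 0 < n - k := by omega
  have hnkn : n - k ≤ n := Nat.sub_le n k
  -- Step 1: left kernel of H_ν is trivial
  have key : ∀ v : Fin (n - k) → F, v ᵥ* H (Fin.last ν) = 0 → v = 0 := by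
    intro v hv
    by_contra hv0
    -- the column selection
    have hjlt : ∀ l : Fin ((L + 1) * (n - k)),
        (l : ℕ) / (n - k) * n + (l : ℕ) % (n - k) < (ν + L + 1) * n := by
      intro l
      have h1 : (l : ℕ) / (n - k) < L + 1 :=
        Nat.div_lt_of_lt_mul (lt_of_lt_of_le l.isLt (le_of_eq (Nat.mul_comm _ _)))
      have h2 : (l : ℕ) % (n - k) < n - k := Nat.mod_lt _ hnk
      have h3 : ((l : ℕ) / (n - k) + 1) * n ≤ (ν + L + 1) * n :=
        Nat.mul_le_mul_right n (by omega)
      rw [add_mul, one_mul] at h3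
      omega
    set j : Fin ((L + 1) * (n - k)) → Fin ((ν + L + 1) * n) :=
      fun l => ⟨(l : ℕ) / (n - k) * n + (l : ℕ) % (n - k), hjlt l⟩ with hj
    have hsm : StrictMono j := by
      intro l1 l2 h
      simp only [hj, Fin.mk_lt_mk]
      have hd : (l1 : ℕ) / (n - k) ≤ (l2 : ℕ) / (n - k) :=
        Nat.div_le_div_right h.le
      have e1 := Nat.div_add_mod (l1 : ℕ) (n - k)
      have e2 := Nat.div_add_mod (l2 : ℕ) (n - k)
      have m1 : (l1 : ℕ) % (n - k) < n - k := Nat.mod_lt _ hnk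
      have m2 : (l2 : ℕ) % (n - k) < n - k := Nat.mod_lt _ hnk
      rcases eq_or_lt_of_le hd with heq | hlt
      · -- same block: mods must differ
        rw [heq]
        have : (l1 : ℕ) < (l2 : ℕ) := h
        rw [heq] at e1
        omega
      · have h5 : ((l1 : ℕ) / (n - k) + 1) * n ≤ (l2 : ℕ) / (n - k) * n :=
          Nat.mul_le_mul_right n (by omega)
        rw [add_mul, one_mul] at h5
        omega
    have hcc : colCond n k ν L j := by
      intro l s hs1 hsL
      constructor
      · intro hls
        have hdiv : (l : ℕ) / (n - k) = s := by
          rw [hls, Nat.mul_div_cancel_left _ hnk]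
        simp only [hj]
        rw [hdiv]
        exact Nat.le_add_right _ _
      · intro hls
        have hlt : (l : ℕ) < (n - k) * s := by omega
        have hdiv : (l : ℕ) / (n - k) < s := Nat.div_lt_of_lt_mul hlt
        have h5 : ((l : ℕ) / (n - k) + 1) * n ≤ s * n :=
          Nat.mul_le_mul_right n (by omega)
        rw [add_mul, one_mul] at h5
        have m1 : (l : ℕ) % (n - k) < n - k := Nat.mod_lt _ hnk
        simp only [hj]
        have : 0 < ν * n := Nat.mul_pos hν (by omega)
        omega
    -- the kernel vector of the submatrix
    set M := (ppcm F n k ν L H).submatrix id j with hM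
    set v' : Fin ((L + 1) * (n - k)) → F :=
      fun r => if (r : ℕ) / (n - k) = L then v ⟨(r : ℕ) % (n - k), Nat.mod_lt _ hnk⟩ else 0
      with hv'
    have hvne : v' ≠ 0 := by
      obtain ⟨i, hi⟩ := Function.ne_iff.mp hv0
      have hr0 : (i : ℕ) + (n - k) * L < (L + 1) * (n - k) := by
        have : (n - k) * L + (n - k) = (L + 1) * (n - k) := by ring
        omega
      intro h0
      set r0 : Fin ((L + 1) * (n - k)) := ⟨(i : ℕ) + (n - k) * L, hr0⟩ with hr0def
      have hdiv0 : (r0 : ℕ) / (n - k) = L := by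
        show ((i : ℕ) + (n - k) * L) / (n - k) = L
        rw [Nat.add_mul_div_left _ _ hnk, Nat.div_eq_of_lt i.isLt, Nat.zero_add]
      have hmod0 : (r0 : ℕ) % (n - k) = (i : ℕ) := by
        show ((i : ℕ) + (n - k) * L) % (n - k) = (i : ℕ)
        rw [Nat.add_mul_mod_self_left, Nat.mod_eq_of_lt i.isLt]
      have hthis := congrFun h0 r0
      simp only [hv', Pi.zero_apply] at hthis
      rw [if_pos hdiv0] at hthis
      have heq : (⟨(r0 : ℕ) % (n - k), Nat.mod_lt _ hnk⟩ : Fin (n - k)) = i := Fin.ext hmod0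
      rw [heq] at hthis
      exact hi (by simpa using hthis)
    have hker : v' ᵥ* M = 0 := by
      funext l
      -- the column data
      have hdl : (l : ℕ) / (n - k) ≤ L := by
        have h0 : (l : ℕ) < (n - k) * (L + 1) :=
          lt_of_lt_of_le l.isLt (le_of_eq (Nat.mul_comm _ _))
        have := Nat.div_lt_of_lt_mul h0
        omega
      have hml : (l : ℕ) % (n - k) < n - k := Nat.mod_lt _ hnk
      have hcval : ((j l : ℕ)) = (l : ℕ) % (n - k) + n * ((l : ℕ) / (n - k)) := by
        show (l : ℕ) / (n - k) * n + (l : ℕ) % (n - k) = _; ring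
      have hcdiv : ((j l : ℕ)) / n = (l : ℕ) / (n - k) := by
        rw [hcval, Nat.add_mul_div_left _ _ (by omega : 0 < n),
          Nat.div_eq_of_lt (by omega), Nat.zero_add]
      have hcmod : ((j l : ℕ)) % n = (l : ℕ) % (n - k) := by
        rw [hcval, Nat.add_mul_mod_self_left, Nat.mod_eq_of_lt (by omega)]
      have hsum : (v' ᵥ* M) l = ∑ p : Fin (L + 1) × Fin (n - k),
          v' (finProdFinEquiv p) * M (finProdFinEquiv p) l := by
        rw [Matrix.vecMul, dotProduct]
        exact (Fintype.sum_equiv finProdFinEquiv _ _ (fun p => rfl)).symm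
      rw [Pi.zero_apply, hsum, Fintype.sum_prod_type]
      have hterm : ∀ (s : Fin (L + 1)) (i : Fin (n - k)),
          v' (finProdFinEquiv (s, i)) * M (finProdFinEquiv (s, i)) l =
          if ((s : ℕ) = L ∧ (l : ℕ) / (n - k) = L) then
            v i * H (Fin.last ν) i ⟨(l : ℕ) % (n - k), by omega⟩ else 0 := by
        intro s i
        have hrval : ((finProdFinEquiv (s, i) : Fin ((L+1)*(n-k))) : ℕ) = (i : ℕ) + (n - k) * (s : ℕ) := rfl
        have hrdiv : ((finProdFinEquiv (s, i) : Fin ((L+1)*(n-k))) : ℕ) / (n - k) = (s : ℕ) := by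
          rw [hrval, Nat.add_mul_div_left _ _ hnk, Nat.div_eq_of_lt i.isLt, Nat.zero_add]
        have hrmod : ((finProdFinEquiv (s, i) : Fin ((L+1)*(n-k))) : ℕ) % (n - k) = (i : ℕ) := by
          rw [hrval, Nat.add_mul_mod_self_left, Nat.mod_eq_of_lt i.isLt]
        by_cases hsL : (s : ℕ) = L
        · by_cases hdL : (l : ℕ) / (n - k) = L
          · rw [if_pos ⟨hsL, hdL⟩]
            have hv'eq : v' (finProdFinEquiv (s, i)) = v i := by
              simp only [hv']
              rw [if_pos (by rw [hrdiv]; exact hsL)]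
              congr 1
              exact Fin.ext hrmod
            have hMeq : M (finProdFinEquiv (s, i)) l =
                H (Fin.last ν) i ⟨(l : ℕ) % (n - k), by omega⟩ := by
              rw [hM, Matrix.submatrix_apply, id_eq,
                ppcm_apply_diag F n k ν L H _ _ hnk (by omega)
                  (by rw [hrdiv, hcdiv, hsL, hdL])]
              congr 1
              · exact Fin.ext hrmod
              · exact Fin.ext hcmod
            rw [hv'eq, hMeq]
          · rw [if_neg (by tauto)]
            -- entry of M is zero since L ≤ (l)/(n-k) fails
            have hMeq : M (finProdFinEquiv (s, i)) l = 0 := by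
              rw [hM, Matrix.submatrix_apply, id_eq]
              exact ppcm_apply_zero F n k ν L H _ _ (by rw [hrdiv, hcdiv, hsL]; omega)
            rw [hMeq, mul_zero]
        · rw [if_neg (by tauto)]
          have hv'eq : v' (finProdFinEquiv (s, i)) = 0 := by
            simp only [hv']
            rw [if_neg (by rw [hrdiv]; exact hsL)]
          rw [hv'eq, zero_mul]
      rw [Finset.sum_congr rfl fun s _ => Finset.sum_congr rfl fun i _ => hterm s i]
      by_cases hdL : (l : ℕ) / (n - k) = L
      · have hrow := congrFun hv ⟨(l : ℕ) % (n - k), by omega⟩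
        simp only [Matrix.vecMul, dotProduct, Pi.zero_apply] at hrow
        rw [Finset.sum_eq_single (Fin.last L)]
        · simp only [Fin.val_last, hdL, and_self, if_true]
          simpa using hrow
        · intro b _ hb
          rw [Finset.sum_eq_zero]
          intro i _
          rw [if_neg]
          intro hcon
          exact hb (Fin.ext hcon.1)
        · intro h; exact absurd (Finset.mem_univ _) h
      · rw [Finset.sum_eq_zero]
        intro s _
        rw [Finset.sum_eq_zero]
        intro i _
        rw [if_neg (by tauto)]
    exact hminor j hsm hcc (Matrix.exists_vecMul_eq_zero_iff.mp ⟨v', hvne, hker⟩)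
  -- linear independence of the rows of H_ν
  have hli : LinearIndependent F (H (Fin.last ν)) := by
    apply Fintype.linearIndependent_iff.mpr
    intro g hg i
    have : g ᵥ* H (Fin.last ν) = 0 := by
      funext c
      have := congrFun hg c
      simpa [Matrix.vecMul, dotProduct, Finset.sum_apply] using this
    exact congrFun (key g this) i
  have hrank : (H (Fin.last ν)).rank = n - k := by
    rw [hli.rank_matrix, Fintype.card_fin]
  -- every row of H_ν is nonzero
  have hrownz : ∀ r : Fin (n - k), ∃ c : Fin n, H (Fin.last ν) r c ≠ 0 := by
    intro r
    by_contra hall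
    push_neg at hall
    have h1 : (Pi.single r (1 : F)) ᵥ* H (Fin.last ν) = 0 := by
      rw [Matrix.single_one_vecMul]
      funext c; exact hall c
    have := congrFun (key _ h1) r
    simp at this
  -- the generic degree bound
  have hdegle : ∀ (r : Fin (n - k)) (c : Fin n),
      (∑ i : Fin (ν + 1), Polynomial.C (H i r c) * Polynomial.X ^ (i : ℕ)).natDegree ≤ ν := by
    intro r c
    apply Polynomial.natDegree_sum_le_of_forall_le
    intro i _
    refine le_trans (Polynomial.natDegree_mul_le) ?_
    simp only [Polynomial.natDegree_C, Polynomial.natDegree_X_pow, zero_add]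
    omega
  -- the top coefficient
  have hcoeff : ∀ (r : Fin (n - k)) (c : Fin n),
      (∑ i : Fin (ν + 1), Polynomial.C (H i r c) * Polynomial.X ^ (i : ℕ)).coeff ν =
        H (Fin.last ν) r c := by
    intro r c
    rw [Polynomial.finset_sum_coeff]
    rw [Finset.sum_eq_single (Fin.last ν)]
    · simp
    · intro b _ hb
      rw [Polynomial.coeff_C_mul, Polynomial.coeff_X_pow, if_neg, mul_zero]
      intro hcon
      exact hb (Fin.ext (by simp only [Fin.val_last]; omega))
    · intro h; exact absurd (Finset.mem_univ _) h
  have hrd : ∀ r : Fin (n - k), rowDeg F n k ν H r = ν := by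
    intro r
    obtain ⟨c0, hc0⟩ := hrownz r
    apply le_antisymm
    · rw [rowDeg]
      exact Finset.sup_le fun c _ => hdegle r c
    · have hne : (∑ i : Fin (ν + 1), Polynomial.C (H i r c0) * Polynomial.X ^ (i : ℕ)).coeff ν ≠ 0 := by
        rw [hcoeff]; exact hc0
      have : ν ≤ (∑ i : Fin (ν + 1), Polynomial.C (H i r c0) * Polynomial.X ^ (i : ℕ)).natDegree :=
        Polynomial.le_natDegree_of_ne_zero hne
      rw [rowDeg]
      exact le_trans this (Finset.le_sup (f := fun c : Fin n =>
        (∑ i : Fin (ν + 1), Polynomial.C (H i r c) * Polynomial.X ^ (i : ℕ)).natDegree)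
        (Finset.mem_univ c0))
  refine ⟨hrank, hrd, ?_⟩
  rw [Finset.sum_congr rfl fun r _ => hrd r]
  simp [Finset.sum_const, Finset.card_univ, Nat.mul_comm]
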